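/- Let A be an SPD matrix, S̃ and Ŝ SPD matrices with Ŝ⁻¹S̃ having all eigenvalues in [1, c] for some c > 1, and consider the saddle point matrix 𝒜 = [[K, −Eᵀ],[−E, −F]] (with K SPD, Schur complement S̃ = F + E K⁻¹ Eᵀ) preconditioned by the block diagonal 𝒫 = diag(K, Ŝ). Then every eigenvalue λ of 𝒫⁻¹𝒜 satisfies λ ∈ [−√c, −1] ∪ [1, √c]. -/
import Mathlib


open Matrix

theorem saddle_point_diag_precond_eigenvalues {n m : ℕ}
    (K : Matrix (Fin n) (Fin n) ℝ) (E : Matrix (Fin m) (Fin n) ℝ)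
    (F Shat : Matrix (Fin m) (Fin m) ℝ) (c : ℝ)
    (hK : K.PosDef) (hF : F.PosSemidef) (hShat : Shat.PosDef)
    (hStilde : (F + E * K⁻¹ * Eᵀ).PosDef)
    (hc : 1 < c)
    (hFShat : F = Shat)
    (heig : ∀ (lam : ℝ) (v : Fin m → ℝ), v ≠ 0 →
      (Shat⁻¹ * (F + E * K⁻¹ * Eᵀ)).mulVec v = lam • v → 1 ≤ lam ∧ lam ≤ c) :
    ∀ (lam : ℝ) (v : Fin n ⊕ Fin m → ℝ), v ≠ 0 →
      ((fromBlocks K 0 0 Shat)⁻¹ * fromBlocks K (-Eᵀ) (-E) (-F)).mulVec v = lam • v →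
      (-Real.sqrt c ≤ lam ∧ lam ≤ -1) ∨ (1 ≤ lam ∧ lam ≤ Real.sqrt c) := by
  intro lam v hv h
  have hKdet : IsUnit K.det := isUnit_iff_ne_zero.mpr hK.det_pos.ne'
  have hShatdet : IsUnit Shat.det := isUnit_iff_ne_zero.mpr hShat.det_pos.ne'
  have hPdet : IsUnit (fromBlocks K (0 : Matrix (Fin n) (Fin m) ℝ) 0 Shat).det := by
    rw [Matrix.det_fromBlocks_zero₂₁]
    exact hKdet.mul hShatdet
  set u : Fin n → ℝ := v ∘ Sum.inl with hu
  set p : Fin m → ℝ := v ∘ Sum.inr with hp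
  have hveq : v = Sum.elim u p := by funext x; cases x <;> rfl
  -- multiply the eigen-equation by P
  have h2 : (fromBlocks K (-Eᵀ) (-E) (-F)).mulVec v
      = (fromBlocks K 0 0 Shat).mulVec (lam • v) := by
    have h3 := congrArg (fun w => (fromBlocks K (0 : Matrix (Fin n) (Fin m) ℝ) 0 Shat).mulVec w) h
    simp only [Matrix.mulVec_mulVec] at h3
    rw [← Matrix.mul_assoc, Matrix.mul_nonsing_inv _ hPdet, Matrix.one_mul] at h3
    exact h3
  have hsmul : lam • (Sum.elim u p) = Sum.elim (lam • u) (lam • p) := by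
    funext x; cases x <;> rfl
  rw [hveq] at h2
  rw [hsmul, Matrix.fromBlocks_mulVec, Matrix.fromBlocks_mulVec] at h2
  have e1 : K *ᵥ u + (-Eᵀ) *ᵥ p = K *ᵥ (lam • u) := by
    have := congrFun h2
    funext i
    have h4 := this (Sum.inl i)
    simpa using h4
  have e2 : (-E) *ᵥ u + (-F) *ᵥ p = Shat *ᵥ (lam • p) := by
    funext j
    have h4 := congrFun h2 (Sum.inr j)
    simpa using h4
  -- rewrite e1, e2
  have e1' : Eᵀ *ᵥ p = (1 - lam) • (K *ᵥ u) := by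
    have : K *ᵥ u - Eᵀ *ᵥ p = lam • (K *ᵥ u) := by
      rw [← Matrix.mulVec_smul]
      rw [Matrix.neg_mulVec] at e1
      linear_combination (norm := module) e1
    linear_combination (norm := module) -this
  have e2' : E *ᵥ u = (-(1 + lam)) • (Shat *ᵥ p) := by
    rw [Matrix.neg_mulVec, Matrix.neg_mulVec, hFShat, Matrix.mulVec_smul] at e2
    linear_combination (norm := module) -e2
  have hKinv : ∀ w : Fin n → ℝ, K⁻¹ *ᵥ (K *ᵥ w) = w := by
    intro w
    rw [Matrix.mulVec_mulVec, Matrix.nonsing_inv_mul _ hKdet, Matrix.one_mulVec]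
  by_cases hl1 : lam = 1
  · right
    subst hl1
    exact ⟨le_refl 1, by
      rw [show (1 : ℝ) = Real.sqrt 1 by simp]
      exact Real.sqrt_le_sqrt hc.le⟩
  · have hp0 : p ≠ 0 := by
      intro hp0
      have hu0 : u = 0 := by
        have : (1 - lam) • (K *ᵥ u) = Eᵀ *ᵥ p := e1'.symm
        rw [hp0, Matrix.mulVec_zero] at this
        have hKu : K *ᵥ u = 0 := by
          rcases smul_eq_zero.mp this with h' | h'
          · exact absurd (by linarith [sub_eq_zero.mp h']) hl1
          · exact h'
        have := hKinv u
        rw [hKu, Matrix.mulVec_zero] at this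
        exact this.symm
      apply hv
      rw [hveq, hu0, hp0]
      funext x; cases x <;> rfl
    -- key computation: S̃ p = lam² • Shat p
    have key : (Shat⁻¹ * (F + E * K⁻¹ * Eᵀ)) *ᵥ p = (lam ^ 2) • p := by
      have hEKE : (E * K⁻¹ * Eᵀ) *ᵥ p = (lam ^ 2 - 1) • (Shat *ᵥ p) := by
        rw [← Matrix.mulVec_mulVec, ← Matrix.mulVec_mulVec, e1', Matrix.mulVec_smul,
          hKinv, Matrix.mulVec_smul, e2']
        rw [smul_smul]
        ring_nf
      have hSt : (F + E * K⁻¹ * Eᵀ) *ᵥ p = (lam ^ 2) • (Shat *ᵥ p) := by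
        rw [Matrix.add_mulVec, hEKE, hFShat]
        module
      rw [← Matrix.mulVec_mulVec, hSt, Matrix.mulVec_smul, Matrix.mulVec_mulVec,
        Matrix.nonsing_inv_mul _ hShatdet, Matrix.one_mulVec]
    obtain ⟨hlo, hhi⟩ := heig (lam ^ 2) p hp0 key
    have habs1 : 1 ≤ |lam| := by
      nlinarith [abs_nonneg lam, sq_abs lam]
    have habs2 : |lam| ≤ Real.sqrt c := by
      rw [← Real.sqrt_sq (abs_nonneg lam)]
      exact Real.sqrt_le_sqrt (by rw [sq_abs]; exact hhi)
    rcases le_or_gt 0 lam with hs | hs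
    · right
      rw [abs_of_nonneg hs] at habs1 habs2
      exact ⟨habs1, habs2⟩
    · left
      rw [abs_of_neg hs] at habs1 habs2
      constructor <;> linarith
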